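/- Let α > 0 and suppose (a_n) and (b_n) are sequences with n·a_n → ∞ and b_n → 0. Set R_n = 2·log(n/ν) for fixed ν > 0. Then uniformly for r ∈ [a_n, b_n] and y ∈ [R_n − r, R_n), the quantity (cosh(r)cosh(y) − cosh(R_n))/(sinh(r)sinh(y)) equals −(R_n − y)/r + O(r) as n → ∞. -/

import Mathlib

open Real Filter

/-- Radius of the random hyperbolic graph: `R_n = 2 log(n/ν)`. -/
noncomputable def Rn (ν : ℝ) (n : ℕ) : ℝ := 2 * Real.log (n / ν)

lemma aux_sinh_le_mul_cosh {x : ℝ} (hx : 0 ≤ x) : Real.sinh x ≤ x * Real.cosh x := by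
  have hder : ∀ z : ℝ, HasDerivAt (fun w => w * Real.cosh w - Real.sinh w)
      (z * Real.sinh z) z := by
    intro z
    have h1 : HasDerivAt (fun w : ℝ => w * Real.cosh w)
        (1 * Real.cosh z + z * Real.sinh z) z :=
      (hasDerivAt_id z).mul (Real.hasDerivAt_cosh z)
    have h2 := h1.sub (Real.hasDerivAt_sinh z)
    refine h2.congr_deriv ?_
    ring
  have mono : MonotoneOn (fun w => w * Real.cosh w - Real.sinh w) (Set.Ici 0) := by
    apply monotoneOn_of_deriv_nonneg (convex_Ici 0)
    · exact ((continuous_id.mul Real.continuous_cosh).sub Real.continuous_sinh).continuousOn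
    · intro z _
      exact (hder z).differentiableAt.differentiableWithinAt
    · intro z hz
      rw [interior_Ici] at hz
      rw [(hder z).deriv]
      exact mul_nonneg hz.le (le_trans hz.le (Real.self_le_sinh_iff.2 hz.le))
  have h := mono Set.self_mem_Ici hx hx
  simpa using h

lemma aux_cosh_lt_two {x : ℝ} (h0 : 0 ≤ x) (h1 : x ≤ 1) : Real.cosh x < 2 := by
  have hc : Real.cosh x ≤ Real.cosh 1 := by
    rw [Real.cosh_le_cosh, abs_of_nonneg h0, abs_one]; exact h1
  have he : Real.exp 1 < 2.7182818286 := Real.exp_one_lt_d9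
  have he' : Real.exp (-1 : ℝ) < 1 := by
    rw [Real.exp_lt_one_iff]; norm_num
  have : Real.cosh 1 = (Real.exp 1 + Real.exp (-1)) / 2 := Real.cosh_eq 1
  nlinarith

lemma aux_cosh_le_one_add_sq {x : ℝ} (h0 : 0 ≤ x) (h1 : x ≤ 1) :
    Real.cosh x ≤ 1 + x ^ 2 := by
  have hder : ∀ z : ℝ, HasDerivAt (fun w => 1 + w ^ 2 - Real.cosh w)
      (2 * z - Real.sinh z) z := by
    intro z
    have h1 : HasDerivAt (fun w : ℝ => 1 + w ^ 2) (2 * z) z := by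
      have := ((hasDerivAt_pow 2 z).const_add (1 : ℝ))
      refine this.congr_deriv ?_
      simp [mul_comm]
    have h2 := h1.sub (Real.hasDerivAt_cosh z)
    exact h2
  have mono : MonotoneOn (fun w => 1 + w ^ 2 - Real.cosh w) (Set.Icc 0 1) := by
    apply monotoneOn_of_deriv_nonneg (convex_Icc 0 1)
    · exact ((continuous_const.add (continuous_pow 2)).sub Real.continuous_cosh).continuousOn
    · intro z _
      exact (hder z).differentiableAt.differentiableWithinAt
    · intro z hz
      rw [interior_Icc] at hz
      rw [(hder z).deriv]
      have hs : Real.sinh z ≤ z * Real.cosh z := aux_sinh_le_mul_cosh hz.1.le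
      have hc : Real.cosh z < 2 := aux_cosh_lt_two hz.1.le hz.2.le
      nlinarith [hz.1, hz.2]
  have h := mono (Set.left_mem_Icc.2 zero_le_one) (Set.mem_Icc.2 ⟨h0, h1⟩) h0
  simp only [Real.cosh_zero] at h
  nlinarith [h]

lemma aux_cosh_le_two_sinh {y : ℝ} (hy : 1 ≤ y) : Real.cosh y ≤ 2 * Real.sinh y := by
  have hE : Real.exp 1 ≤ Real.exp y := Real.exp_le_exp.2 hy
  have hE1 : (2.7182818283 : ℝ) < Real.exp 1 := Real.exp_one_gt_d9
  have hEpos : 0 < Real.exp y := Real.exp_pos y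
  have hneg : Real.exp (-y) = (Real.exp y)⁻¹ := Real.exp_neg y
  rw [Real.cosh_eq, Real.sinh_eq, hneg]
  have h3 : (3 : ℝ) ≤ Real.exp y * Real.exp y := by nlinarith
  have hinv : 3 * (Real.exp y)⁻¹ ≤ Real.exp y := by
    rw [inv_eq_one_div, mul_one_div, div_le_iff₀ hEpos]
    linarith
  have hinvpos : 0 < (Real.exp y)⁻¹ := inv_pos.2 hEpos
  linarith

set_option maxHeartbeats 1000000 in
/-- Uniform estimate of the cosine of the half angular width for small radii: if
`n·a_n → ∞` and `b_n → 0`, then uniformly for `r ∈ [a_n,b_n]` and `y ∈ [R_n − r, R_n)`,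
`(cosh r cosh y − cosh R_n)/(sinh r sinh y) = −(R_n − y)/r + O(r)`. -/
theorem stmt_15 (α ν : ℝ) (hα : 0 < α) (hν : 0 < ν) (a b : ℕ → ℝ)
    (ha0 : ∀ n, 0 < a n) (hab : ∀ n, a n ≤ b n)
    (hna : Tendsto (fun n : ℕ => (n : ℝ) * a n) atTop atTop)
    (hb : Tendsto b atTop (nhds 0)) :
    ∃ C > 0, ∃ N : ℕ, ∀ n ≥ N, ∀ r ∈ Set.Icc (a n) (b n),
      ∀ y ∈ Set.Ico (Rn ν n - r) (Rn ν n),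
        |(Real.cosh r * Real.cosh y - Real.cosh (Rn ν n)) / (Real.sinh r * Real.sinh y)
            + (Rn ν n - y) / r| ≤ C * r := by
  refine ⟨3, by norm_num, ?_⟩
  have hev : ∀ᶠ n : ℕ in atTop, b n < 1 ∧ 2 ≤ Rn ν n := by
    have h1 : ∀ᶠ n : ℕ in atTop, b n < 1 := hb.eventually (gt_mem_nhds one_pos)
    have h2 : ∀ᶠ n : ℕ in atTop, ν * Real.exp 1 ≤ (n : ℝ) :=
      tendsto_natCast_atTop_atTop.eventually_ge_atTop (ν * Real.exp 1)
    filter_upwards [h1, h2] with n hn1 hn2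
    refine ⟨hn1, ?_⟩
    have hnν : Real.exp 1 ≤ (n : ℝ) / ν := by
      rw [le_div_iff₀ hν]; linarith [hn2]
    have hpos : 0 < (n : ℝ) / ν := lt_of_lt_of_le (Real.exp_pos 1) hnν
    have : (1 : ℝ) ≤ Real.log ((n : ℝ) / ν) := (Real.le_log_iff_exp_le hpos).2 hnν
    unfold Rn; linarith
  obtain ⟨N, hN⟩ := eventually_atTop.mp hev
  refine ⟨N, ?_⟩
  rintro n hn r ⟨hra, hrb⟩ y ⟨hy1, hy2⟩
  obtain ⟨hb1, hR2⟩ := hN n hn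
  set R := Rn ν n with hRdef
  have hr0 : 0 < r := lt_of_lt_of_le (ha0 n) hra
  have hr1 : r ≤ 1 := le_trans hrb hb1.le
  set t := R - y with ht
  clear_value t
  have ht0 : 0 < t := by simp only [ht]; linarith
  have htr : t ≤ r := by simp only [ht]; linarith
  have hyge : 1 ≤ y := by linarith
  have hsr : 0 < Real.sinh r := Real.sinh_pos_iff.2 hr0
  have hsy : 0 < Real.sinh y := Real.sinh_pos_iff.2 (by linarith)
  have hRyt : R = y + t := by simp [ht]
  have hkey : (Real.cosh r * Real.cosh y - Real.cosh R) / (Real.sinh r * Real.sinh y)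
      + t / r
      = (Real.cosh r - Real.cosh t) * Real.cosh y / (Real.sinh r * Real.sinh y)
        + (t / r - Real.sinh t / Real.sinh r) := by
    rw [hRyt, Real.cosh_add]
    field_simp
    ring
  rw [hkey]
  -- bounds on the pieces
  have hcr : Real.cosh r - 1 ≤ r ^ 2 := by
    have := aux_cosh_le_one_add_sq hr0.le hr1; linarith
  have hct1 : 1 ≤ Real.cosh t := Real.one_le_cosh t
  have hctr : Real.cosh t ≤ Real.cosh r := by
    rw [Real.cosh_le_cosh, abs_of_pos ht0, abs_of_pos hr0]; exact htr
  have hcy : Real.cosh y ≤ 2 * Real.sinh y := aux_cosh_le_two_sinh hyge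
  have hsr_ge : r ≤ Real.sinh r := Real.self_le_sinh_iff.2 hr0.le
  have hst_ge : t ≤ Real.sinh t := Real.self_le_sinh_iff.2 ht0.le
  have hsr_le : Real.sinh r ≤ r * Real.cosh r := aux_sinh_le_mul_cosh hr0.le
  have hst_le : Real.sinh t ≤ t * Real.cosh t := aux_sinh_le_mul_cosh ht0.le
  have hcy0 : 0 < Real.cosh y := Real.cosh_pos y
  -- term A
  have hA0 : 0 ≤ (Real.cosh r - Real.cosh t) * Real.cosh y / (Real.sinh r * Real.sinh y) := by
    apply div_nonneg
    · exact mul_nonneg (by linarith) hcy0.le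
    · exact (mul_pos hsr hsy).le
  have hA : (Real.cosh r - Real.cosh t) * Real.cosh y / (Real.sinh r * Real.sinh y)
      ≤ 2 * r := by
    rw [div_le_iff₀ (mul_pos hsr hsy)]
    nlinarith [mul_nonneg (mul_nonneg hr0.le hsy.le) (sub_nonneg.2 hsr_ge),
      mul_nonneg (sq_nonneg r) (sub_nonneg.2 hcy),
      mul_nonneg (by nlinarith : (0:ℝ) ≤ r ^ 2 - (Real.cosh r - Real.cosh t)) hcy0.le]
  -- term B
  have hB : |t / r - Real.sinh t / Real.sinh r| ≤ r ^ 2 := by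
    have kA : r * Real.sinh t - t * Real.sinh r ≤ t * r * (Real.cosh r - 1) := by
      nlinarith [mul_nonneg hr0.le (sub_nonneg.2 hst_le),
        mul_nonneg ht0.le (sub_nonneg.2 hsr_ge),
        mul_nonneg (mul_pos hr0 ht0).le (sub_nonneg.2 hctr)]
    have kB : t * Real.sinh r - r * Real.sinh t ≤ t * r * (Real.cosh r - 1) := by
      nlinarith [mul_nonneg ht0.le (sub_nonneg.2 hsr_le),
        mul_nonneg hr0.le (sub_nonneg.2 hst_ge)]
    have k3 : t * r * (Real.cosh r - 1) ≤ r ^ 2 * (r * Real.sinh r) := by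
      nlinarith [mul_nonneg (mul_pos hr0 ht0).le (by linarith : (0:ℝ) ≤ r ^ 2 - (Real.cosh r - 1)),
        mul_nonneg (mul_nonneg (sq_nonneg r) hr0.le) (sub_nonneg.2 htr),
        mul_nonneg (mul_nonneg (sq_nonneg r) hr0.le) (sub_nonneg.2 hsr_ge)]
    rw [div_sub_div _ _ hr0.ne' hsr.ne', abs_div, abs_of_pos (mul_pos hr0 hsr),
      div_le_iff₀ (mul_pos hr0 hsr), abs_le]
    constructor
    · linarith
    · linarith
  have hAabs : |(Real.cosh r - Real.cosh t) * Real.cosh y / (Real.sinh r * Real.sinh y)|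
      ≤ 2 * r := by rw [abs_of_nonneg hA0]; exact hA
  have hr2 : r ^ 2 ≤ r := by nlinarith
  calc |(Real.cosh r - Real.cosh t) * Real.cosh y / (Real.sinh r * Real.sinh y)
      + (t / r - Real.sinh t / Real.sinh r)|
      ≤ |(Real.cosh r - Real.cosh t) * Real.cosh y / (Real.sinh r * Real.sinh y)|
        + |t / r - Real.sinh t / Real.sinh r| := abs_add_le _ _
    _ ≤ 2 * r + r ^ 2 := add_le_add hAabs hB
    _ ≤ 3 * r := by linarith
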